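/- For every ℓ ≥ 2, no witness to D_{3ℓ}(H_ℓ) has size less than |H_ℓ| = 6ℓ − 2. -/

import Mathlib

/-!
Formalization framework: finite posets are bundled as `FinPartOrd.{0}`, downsets are
`Finset`s of elements, unlabelled posets are isomorphism classes (`UPoset`), and a witness
of a set `Γ` of unlabelled posets at size `n` is a finite poset whose set of size-`n`
downsets, up to isomorphism, is exactly `Γ`.
-/

attribute [local instance] Classical.propDecidable

noncomputable section

open Finset

/-- `D` is a downset of the finite poset `Q`. -/
def IsDownset (Q : FinPartOrd.{0}) (D : Finset ↥Q) : Prop :=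
  ∀ ⦃a b : ↥Q⦄, a ∈ D → b ≤ a → b ∈ D

/-- The induced subposet of `Q` on a finset `D` of its elements. -/
def subposet (Q : FinPartOrd.{0}) (D : Finset ↥Q) : FinPartOrd.{0} :=
  FinPartOrd.of {x : ↥Q // x ∈ D}

/-- The isomorphism setoid on finite posets. -/
def isoSetoid : Setoid FinPartOrd.{0} where
  r P Q := Nonempty (↥P ≃o ↥Q)
  iseqv := ⟨fun _ => ⟨OrderIso.refl _⟩, fun ⟨e⟩ => ⟨e.symm⟩, fun ⟨e⟩ ⟨f⟩ => ⟨e.trans f⟩⟩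

/-- Unlabelled finite posets: isomorphism classes of finite posets. -/
def UPoset := Quotient isoSetoid

/-- The isomorphism class of a finite poset. -/
def cls (P : FinPartOrd.{0}) : UPoset := Quotient.mk isoSetoid P

/-- The number of elements of a finite poset. -/
def size (Q : FinPartOrd.{0}) : ℕ := Fintype.card ↥Q

/-- The size of an isomorphism class of finite posets. -/
def usize : UPoset → ℕ :=
  Quotient.lift size fun _ _ h => h.elim fun e => Fintype.card_congr e.toEquiv

/-- `D_n(Q)` : the set of downsets of `Q` of size `n`, up to isomorphism. -/
def DSet (n : ℕ) (Q : FinPartOrd.{0}) : Set UPoset :=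
  {c | ∃ D : Finset ↥Q, IsDownset Q D ∧ D.card = n ∧ cls (subposet Q D) = c}

/-- `d_n(Q)` : the number of isomorphism classes of downsets of `Q` of size `n`. -/
def dNum (n : ℕ) (Q : FinPartOrd.{0}) : ℕ := (DSet n Q).ncard

/-- `D(Q)` : the set of nonempty downsets of `Q`, up to isomorphism. -/
def DAllSet (Q : FinPartOrd.{0}) : Set UPoset :=
  {c | ∃ D : Finset ↥Q, IsDownset Q D ∧ D.Nonempty ∧ cls (subposet Q D) = c}

/-- `Q` is a witness of the set `Γ` of unlabelled posets (at size `n`): the set of size-`n`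
downsets of `Q`, up to isomorphism, is exactly `Γ`. -/
def IsWitness (n : ℕ) (Γ : Set UPoset) (Q : FinPartOrd.{0}) : Prop := DSet n Q = Γ

/-- `Q` is a minimal witness of `Γ` : `Q` is a witness and no proper downset of `Q` is
itself a witness of `Γ`. -/
def IsMinimalWitness (n : ℕ) (Γ : Set UPoset) (Q : FinPartOrd.{0}) : Prop :=
  IsWitness n Γ Q ∧
    ∀ D : Finset ↥Q, IsDownset Q D → D ≠ Finset.univ → ¬IsWitness n Γ (subposet Q D)

/-- The height of an element: the number of elements of a longest chain whose maximum is `x`. -/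
def heightEl (Q : FinPartOrd.{0}) (x : ↥Q) : ℕ :=
  sSup {k | ∃ c : Finset ↥Q, IsChain (· ≤ ·) (c : Set ↥Q) ∧ x ∈ c ∧ (∀ y ∈ c, y ≤ x) ∧ c.card = k}

/-- The height of a finite poset: the number of elements of a longest chain. -/
def posetHeight (Q : FinPartOrd.{0}) : ℕ :=
  sSup {k | ∃ c : Finset ↥Q, IsChain (· ≤ ·) (c : Set ↥Q) ∧ c.card = k}

/-- A finite poset is Newtonian if every element of level `i` covers every element of
level `i - 1`. -/
def Newtonian (Q : FinPartOrd.{0}) : Prop :=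
  ∀ x y : ↥Q, heightEl Q y = heightEl Q x + 1 → x ⋖ y

/-- A finite poset is connected if it is nonempty and any two elements are joined by a
comparability path. -/
def ConnectedPoset (Q : FinPartOrd.{0}) : Prop :=
  Nonempty ↥Q ∧ ∀ x y : ↥Q, Relation.ReflTransGen (fun a b : ↥Q => a ≤ b ∨ b ≤ a) x y

/-- `x` is a maximal element of the subset `W` of `Q`. -/
def IsMaxIn (Q : FinPartOrd.{0}) (W : Finset ↥Q) (x : ↥Q) : Prop :=
  x ∈ W ∧ ∀ y ∈ W, x ≤ y → y = x

/-- `x` is a maximal element of the finite poset `R`. -/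
def IsMaxEl (R : FinPartOrd.{0}) (x : ↥R) : Prop := ∀ y, x ≤ y → y = x

/-- A poset of type 𝒲 : the disjoint union of two connected Newtonian posets that are not
isomorphic, but which only differ in one maximal element (they become isomorphic after the
removal of a suitable maximal element from each). -/
def TypeW (P : FinPartOrd.{0}) : Prop :=
  ∃ W₁ W₂ : Finset ↥P,
    W₁ ∪ W₂ = Finset.univ ∧ Disjoint W₁ W₂ ∧
    (∀ x ∈ W₁, ∀ y ∈ W₂, ¬x ≤ y ∧ ¬y ≤ x) ∧
    ConnectedPoset (subposet P W₁) ∧ ConnectedPoset (subposet P W₂) ∧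
    Newtonian (subposet P W₁) ∧ Newtonian (subposet P W₂) ∧
    ¬Nonempty (↥(subposet P W₁) ≃o ↥(subposet P W₂)) ∧
    ∃ x y, IsMaxIn P W₁ x ∧ IsMaxIn P W₂ y ∧
      Nonempty (↥(subposet P (W₁.erase x)) ≃o ↥(subposet P (W₂.erase y)))

/-- An antichain on `i` elements. -/
def AntichainFin (i : ℕ) : Type := Fin i

instance (i : ℕ) : PartialOrder (AntichainFin i) where
  le x y := x = y
  le_refl _ := rfl
  le_trans a b c h₁ h₂ := show a = c from (show a = b from h₁).trans (show b = c from h₂)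
  le_antisymm _ _ h _ := h

instance (i : ℕ) : Fintype (AntichainFin i) := inferInstanceAs (Fintype (Fin i))
instance (i : ℕ) : Fintype (WithTop (AntichainFin i)) :=
  inferInstanceAs (Fintype (Option (Fin i)))

/-- `Λ_i`: the poset with `i` minimal elements and one maximal element above all of them. -/
def Lambda (i : ℕ) : FinPartOrd.{0} := FinPartOrd.of (WithTop (AntichainFin i))

/-- `k` disjoint copies of a poset `α`. -/
def Copies (k : ℕ) (α : Type) : Type := Fin k × α

instance (k : ℕ) (α : Type) [PartialOrder α] : PartialOrder (Copies k α) where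
  le x y := x.1 = y.1 ∧ x.2 ≤ y.2
  le_refl _ := ⟨rfl, le_refl _⟩
  le_trans _ _ _ h₁ h₂ := ⟨h₁.1.trans h₂.1, le_trans h₁.2 h₂.2⟩
  le_antisymm x y h₁ h₂ := by
    obtain ⟨x₁, x₂⟩ := x
    obtain ⟨y₁, y₂⟩ := y
    obtain ⟨h, h'⟩ := h₁
    cases h
    exact congrArg _ (le_antisymm h' h₂.2)

instance (k : ℕ) (α : Type) [Fintype α] : Fintype (Copies k α) :=
  inferInstanceAs (Fintype (Fin k × α))

/-- `H_ℓ`: the poset whose connected components are `ℓ` copies of `Λ₂` and one copy of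
`Λ_{3(ℓ-1)}`. -/
def Hposet (ℓ : ℕ) : FinPartOrd.{0} :=
  FinPartOrd.of (Copies ℓ (WithTop (AntichainFin 2)) ⊕ WithTop (AntichainFin (3 * (ℓ - 1))))

/-- The poset `P₀` placed above a chain of `i` elements. -/
def withChain (P₀ : FinPartOrd.{0}) (i : ℕ) : FinPartOrd.{0} :=
  FinPartOrd.of (Fin i ⊕ₗ ↥P₀)

/-- The disjoint union of two finite posets. -/
def disjSum (P R : FinPartOrd.{0}) : FinPartOrd.{0} := FinPartOrd.of (↥P ⊕ ↥R)

/-- The poset `P_iR_i`: the disjoint union of `P₀` and `R₀` each placed above a chain of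
`i` elements. -/
def PRposet (P₀ R₀ : FinPartOrd.{0}) (i : ℕ) : FinPartOrd.{0} :=
  disjSum (withChain P₀ i) (withChain R₀ i)

/-- `C(P₀R₀) = |D(P₀)| + |D(R₀)| − |D(P₀) ∩ D(R₀)|`. -/
def CNum (P₀ R₀ : FinPartOrd.{0}) : ℕ :=
  (DAllSet P₀).ncard + (DAllSet R₀).ncard - (DAllSet P₀ ∩ DAllSet R₀).ncard

/-- The vertices of the exchange graph: the downsets of `Q` of size `n`, as actual subsets. -/
def EGVert (n : ℕ) (Q : FinPartOrd.{0}) : Type :=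
  {D : Finset ↥Q // IsDownset Q D ∧ D.card = n}

/-- The exchange graph `G_n(Q)`: two size-`n` downsets are adjacent iff they differ by
exactly one element. -/
def ExchangeGraph (n : ℕ) (Q : FinPartOrd.{0}) : SimpleGraph (EGVert n Q) where
  Adj X Y := (X.1 \ Y.1).card = 1 ∧ (Y.1 \ X.1).card = 1
  symm := ⟨fun X Y h => ⟨h.2, h.1⟩⟩
  loopless := ⟨fun X h => by
    simp only [Finset.sdiff_self, Finset.card_empty] at h
    exact absurd h.1 (by simp)⟩

/-- The downset `D` of `Q`, viewed as a poset, is isomorphic (a "copy of") `P`. -/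
def IsoTo (Q : FinPartOrd.{0}) (D : Finset ↥Q) (P : FinPartOrd.{0}) : Prop :=
  Nonempty (↥(subposet Q D) ≃o ↥P)

/-- A path `A :: M ++ [C]` in the exchange graph `G_n(Q)` whose first vertex is a copy of
`Pa`, whose last vertex is a copy of `Pb`, and all of whose internal vertices are copies of
`Pmid`. -/
def SpecialPath (n : ℕ) (Q : FinPartOrd.{0}) (Pa Pmid Pb : FinPartOrd.{0})
    (A : EGVert n Q) (M : List (EGVert n Q)) (C : EGVert n Q) : Prop :=
  List.Chain' (ExchangeGraph n Q).Adj (A :: M ++ [C]) ∧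
    IsoTo Q A.1 Pa ∧ IsoTo Q C.1 Pb ∧ ∀ v ∈ M, IsoTo Q v.1 Pmid

/-- `T` is an antichain in `Q`. -/
def IsAntichainIn (Q : FinPartOrd.{0}) (T : Finset ↥Q) : Prop :=
  ∀ x ∈ T, ∀ y ∈ T, x ≤ y → x = y

/-- The possible shapes of `A \ X` and `C \ X`: an antichain possibly together with a single
element below all of it and/or a single element above all of it, or a two-element chain
together with one incomparable element. -/
def GoodForm (Q : FinPartOrd.{0}) (S : Finset ↥Q) : Prop :=
  (∃ T : Finset ↥Q, IsAntichainIn Q T ∧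
    (S = T ∨
      (∃ b, b ∉ T ∧ S = insert b T ∧ ∀ x ∈ T, b < x) ∨
      (∃ t, t ∉ T ∧ S = insert t T ∧ ∀ x ∈ T, x < t) ∨
      (∃ b t, b ∉ T ∧ t ∉ T ∧ b ≠ t ∧ S = insert b (insert t T) ∧
        (∀ x ∈ T, b < x) ∧ ∀ x ∈ T, x < t))) ∨
  (∃ x y z : ↥Q, S = {x, y, z} ∧ x ≠ y ∧ x ≠ z ∧ y ≠ z ∧ x < y ∧
    ¬x ≤ z ∧ ¬z ≤ x ∧ ¬y ≤ z ∧ ¬z ≤ y)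

section AuxSdd

/-- number of elements strictly below `x`. -/
def sdd (Q : FinPartOrd.{0}) (x : ↥Q) : ℕ := (Finset.univ.filter (fun y => y < x)).card

lemma sdd_iso {P Q : FinPartOrd.{0}} (e : ↥P ≃o ↥Q) (x : ↥P) : sdd P x = sdd Q (e x) := by
  refine Finset.card_nbij' (fun y => e y) (fun z => e.symm z) ?_ ?_ ?_ ?_
  · intro a ha
    simp only [Finset.mem_coe, Finset.mem_filter, Finset.mem_univ, true_and] at ha ⊢
    exact e.lt_iff_lt.2 ha
  · intro a ha
    simp only [Finset.mem_coe, Finset.mem_filter, Finset.mem_univ, true_and] at ha ⊢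
    exact e.lt_iff_lt.1 (by rwa [e.apply_symm_apply])
  · intro a _; exact e.symm_apply_apply a
  · intro a _; exact e.apply_symm_apply a

lemma sdd_subposet {Q : FinPartOrd.{0}} {S : Finset ↥Q} (hS : IsDownset Q S)
    (x : ↥(subposet Q S)) : sdd (subposet Q S) x = sdd Q x.val := by
  refine Finset.card_bij (fun y _ => y.val) ?_ ?_ ?_
  · intro a ha
    simp only [Finset.mem_filter, Finset.mem_univ, true_and] at ha ⊢
    exact Subtype.coe_lt_coe.2 ha
  · intro a₁ _ a₂ _ h; exact Subtype.ext h
  · intro b hb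
    simp only [Finset.mem_filter, Finset.mem_univ, true_and] at hb
    refine ⟨⟨b, hS x.2 hb.le⟩, ?_, rfl⟩
    exact Finset.mem_filter.2 ⟨Finset.mem_univ _, Subtype.coe_lt_coe.1 hb⟩

lemma sdd_eq_zero_iff (Q : FinPartOrd.{0}) (x : ↥Q) : sdd Q x = 0 ↔ ∀ y, ¬ y < x := by
  unfold sdd
  rw [Finset.card_eq_zero, Finset.filter_eq_empty_iff]
  simp

/-- extend a downset to a downset of any larger size. -/
lemma downset_extend (Q : FinPartOrd.{0}) :
    ∀ (j : ℕ) (S : Finset ↥Q), IsDownset Q S → ∀ m : ℕ, S.card + j = m →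
      m ≤ Fintype.card ↥Q → ∃ T, S ⊆ T ∧ IsDownset Q T ∧ T.card = m := by
  intro j
  induction j with
  | zero => exact fun S hS m hm _ => ⟨S, Finset.Subset.refl S, hS, by omega⟩
  | succ j ih =>
    intro S hS m hm hmc
    have hne : (Finset.univ \ S).Nonempty := by
      rw [Finset.sdiff_nonempty]
      intro hsub
      have := Finset.card_le_card hsub
      rw [Finset.card_univ] at this
      omega
    obtain ⟨a, ha, hamin⟩ := Finset.exists_minimal hne
    have haS : a ∉ S := (Finset.mem_sdiff.1 ha).2
    have hdown : IsDownset Q (insert a S) := by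
      intro u v hu hvu
      rcases Finset.mem_insert.1 hu with rfl | hu
      · rcases hvu.lt_or_eq with hlt | rfl
        · by_cases hv : v ∈ S
          · exact Finset.mem_insert_of_mem hv
          · exact absurd (hamin (Finset.mem_sdiff.2 ⟨Finset.mem_univ _, hv⟩) hlt.le) hlt.not_ge
        · exact Finset.mem_insert_self _ _
      · exact Finset.mem_insert_of_mem (hS hu hvu)
    obtain ⟨T, hsub, hT, hcard⟩ :=
      ih (insert a S) hdown m (by rw [Finset.card_insert_of_notMem haS]; omega) hmc
    exact ⟨T, (Finset.subset_insert a S).trans hsub, hT, hcard⟩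

end AuxSdd

section AuxH

/-- identity embedding of `Fin i` into `AntichainFin i`. -/
def af {i : ℕ} (j : Fin i) : AntichainFin i := j

lemma af_le_iff {i : ℕ} (a b : AntichainFin i) : a ≤ b ↔ a = b := Iff.rfl

lemma copies_le_def {k : ℕ} {α : Type} [PartialOrder α] {x y : Copies k α} :
    x ≤ y ↔ x.1 = y.1 ∧ x.2 ≤ y.2 := Iff.rfl

lemma wt_le_coe_iff {i : ℕ} (w : WithTop (AntichainFin i)) (j : AntichainFin i) :
    w ≤ (j : WithTop (AntichainFin i)) ↔ w = (j : WithTop (AntichainFin i)) := by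
  cases w with
  | top =>
    constructor
    · intro h; exact absurd h (WithTop.not_top_le_coe j)
    · intro h; exact h.le
  | coe a =>
    rw [WithTop.coe_le_coe, WithTop.coe_eq_coe]
    exact af_le_iff a j

/-- the top of the `k`-th copy of `Λ₂` in `H_l`. -/
def htop (l : ℕ) (k : Fin l) : ↥(Hposet l) := Sum.inl (k, (⊤ : WithTop (AntichainFin 2)))

/-- a minimal element in the `k`-th copy of `Λ₂` in `H_l`. -/
def hmin (l : ℕ) (k : Fin l) (a : AntichainFin 2) : ↥(Hposet l) :=
  Sum.inl (k, (a : WithTop (AntichainFin 2)))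

/-- the top of the big component of `H_l`. -/
def btop (l : ℕ) : ↥(Hposet l) := Sum.inr (⊤ : WithTop (AntichainFin (3 * (l - 1))))

/-- a minimal element of the big component of `H_l`. -/
def bmin (l : ℕ) (a : AntichainFin (3 * (l - 1))) : ↥(Hposet l) :=
  Sum.inr (a : WithTop (AntichainFin (3 * (l - 1))))

lemma hmin_lt_htop (l : ℕ) (k : Fin l) (a : AntichainFin 2) : hmin l k a < htop l k := by
  rw [lt_iff_le_and_ne]
  constructor
  · exact Sum.inl_le_inl_iff.2 ⟨rfl, le_top⟩
  · intro h
    have h2 : ((a : WithTop (AntichainFin 2))) = ⊤ := (Prod.ext_iff.1 (Sum.inl.inj h)).2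
    exact WithTop.coe_ne_top h2

lemma bmin_lt_btop (l : ℕ) (a : AntichainFin (3 * (l - 1))) : bmin l a < btop l := by
  rw [lt_iff_le_and_ne]
  constructor
  · exact Sum.inr_le_inr_iff.2 le_top
  · intro h
    exact WithTop.coe_ne_top (Sum.inr.inj h)

lemma lt_htop_iff (l : ℕ) (k : Fin l) (y : ↥(Hposet l)) :
    y < htop l k ↔ ∃ a : AntichainFin 2, y = hmin l k a := by
  constructor
  · intro h
    rcases y with ⟨k', w⟩ | w
    · have hlt := Sum.inl_lt_inl_iff.1 h
      have hk' : k' = k := (copies_le_def.1 hlt.le).1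
      subst hk'
      cases w with
      | top => exact absurd rfl hlt.ne
      | coe a => exact ⟨a, rfl⟩
    · exact absurd h (by exact Sum.not_inr_lt_inl)
  · rintro ⟨a, rfl⟩; exact hmin_lt_htop l k a

lemma lt_btop_iff (l : ℕ) (y : ↥(Hposet l)) :
    y < btop l ↔ ∃ a, y = bmin l a := by
  constructor
  · intro h
    rcases y with ⟨k', w⟩ | w
    · exact absurd h (by exact Sum.not_inl_lt_inr)
    · cases w with
      | top => exact absurd (Sum.inr_lt_inr_iff.1 h) (lt_irrefl _)
      | coe a => exact ⟨a, rfl⟩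
  · rintro ⟨a, rfl⟩; exact bmin_lt_btop l a

lemma le_hmin_iff (l : ℕ) (k : Fin l) (a : AntichainFin 2) (y : ↥(Hposet l)) :
    y ≤ hmin l k a ↔ y = hmin l k a := by
  constructor
  · intro h
    rcases y with ⟨k', w⟩ | w
    · obtain ⟨hk, hw⟩ := copies_le_def.1 (Sum.inl_le_inl_iff.1 h)
      have hk' : k' = k := hk
      subst hk'
      have hw' : w = (a : WithTop (AntichainFin 2)) := (wt_le_coe_iff w a).1 hw
      rw [hmin, hw']
    · exact absurd h (by exact Sum.not_inr_le_inl)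
  · intro h; exact h.le

lemma le_bmin_iff (l : ℕ) (a : AntichainFin (3 * (l - 1))) (y : ↥(Hposet l)) :
    y ≤ bmin l a ↔ y = bmin l a := by
  constructor
  · intro h
    rcases y with ⟨k', w⟩ | w
    · exact absurd h (by exact Sum.not_inl_le_inr)
    · have hw' : w = (a : WithTop (AntichainFin (3 * (l - 1)))) :=
        (wt_le_coe_iff w a).1 (Sum.inr_le_inr_iff.1 h)
      rw [bmin, hw']
  · intro h; exact h.le

lemma sdd_hmin (l : ℕ) (k : Fin l) (a : AntichainFin 2) : sdd (Hposet l) (hmin l k a) = 0 := by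
  rw [sdd_eq_zero_iff]
  intro y hy
  exact hy.ne ((le_hmin_iff l k a y).1 hy.le)

lemma sdd_bmin (l : ℕ) (a : AntichainFin (3 * (l - 1))) : sdd (Hposet l) (bmin l a) = 0 := by
  rw [sdd_eq_zero_iff]
  intro y hy
  exact hy.ne ((le_bmin_iff l a y).1 hy.le)

lemma fin2_cases : ∀ a : Fin 2, a = 0 ∨ a = 1 := by
  intro a
  rcases a with ⟨v, hv⟩
  match v, hv with
  | 0, _ => exact Or.inl rfl
  | 1, _ => exact Or.inr rfl
  | n + 2, hv => exact absurd hv (by omega)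

lemma af2_cases (a : AntichainFin 2) : a = af 0 ∨ a = af 1 := fin2_cases a

lemma hmin_ne (l : ℕ) (k : Fin l) : hmin l k (af 0) ≠ hmin l k (af 1) := by
  intro h
  have h1 : ((af 0 : AntichainFin 2) : WithTop (AntichainFin 2)) = (af 1 : AntichainFin 2) :=
    (Prod.ext_iff.1 (Sum.inl.inj h)).2
  have h2 : (0 : Fin 2) = 1 := WithTop.coe_inj.1 h1
  have h3 := congrArg Fin.val h2
  simp only [Fin.val_zero, Fin.val_one] at h3
  exact absurd h3 (by omega)

lemma card_antichainfin (i : ℕ) : Fintype.card (AntichainFin i) = i := by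
  have h : Fintype.card (AntichainFin i) = Fintype.card (Fin i) :=
    Fintype.card_congr (show AntichainFin i ≃ Fin i from Equiv.refl (Fin i))
  rw [h, Fintype.card_fin]

lemma hmin_inj (l : ℕ) (k : Fin l) : Function.Injective (hmin l k) := fun _ _ h =>
  WithTop.coe_inj.1 (Prod.ext_iff.1 (Sum.inl.inj h)).2

lemma sdd_htop (l : ℕ) (k : Fin l) : sdd (Hposet l) (htop l k) = 2 := by
  have h : (Finset.univ : Finset (AntichainFin 2)).card
      = (Finset.univ.filter (fun y => y < htop l k)).card := by
    refine Finset.card_bij (fun a _ => hmin l k a) ?_ ?_ ?_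
    · intro a _
      exact Finset.mem_filter.2 ⟨Finset.mem_univ _, hmin_lt_htop l k a⟩
    · intro a₁ _ a₂ _ hh
      exact hmin_inj l k hh
    · intro b hb
      obtain ⟨a, rfl⟩ := (lt_htop_iff l k b).1 (Finset.mem_filter.1 hb).2
      exact ⟨a, Finset.mem_univ _, rfl⟩
  rw [sdd, ← h, Finset.card_univ, card_antichainfin]

lemma bmin_injective (l : ℕ) : Function.Injective (bmin l) := by
  intro a b h
  exact WithTop.coe_inj.1 (Sum.inr.inj h)

lemma sdd_btop (l : ℕ) : sdd (Hposet l) (btop l) = 3 * (l - 1) := by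
  have hfil : (Finset.univ.filter (fun y => y < btop l)) = Finset.univ.image (bmin l) := by
    ext y
    simp only [Finset.mem_filter, Finset.mem_univ, true_and, Finset.mem_image, lt_btop_iff]
    constructor
    · rintro ⟨a, rfl⟩; exact ⟨a, rfl⟩
    · rintro ⟨a, rfl⟩; exact ⟨a, rfl⟩
  rw [sdd, hfil, Finset.card_image_of_injective _ (bmin_injective l), Finset.card_univ,
    card_antichainfin]

lemma H_classify (l : ℕ) (x : ↥(Hposet l)) :
    (∃ k, x = htop l k) ∨ x = btop l ∨ sdd (Hposet l) x = 0 := by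
  rcases x with ⟨k, w⟩ | w
  · cases w with
    | top => exact Or.inl ⟨k, rfl⟩
    | coe a => exact Or.inr (Or.inr (sdd_hmin l k a))
  · cases w with
    | top => exact Or.inr (Or.inl rfl)
    | coe a => exact Or.inr (Or.inr (sdd_bmin l a))

end AuxH

section AuxF

/-- The downset of `H_l` made of all `l` copies of `Λ₂`. -/
def FD (l : ℕ) : Finset ↥(Hposet l) :=
  Finset.univ.image (fun a : Copies l (WithTop (AntichainFin 2)) => (Sum.inl a : ↥(Hposet l)))

lemma mem_FD (l : ℕ) (x : ↥(Hposet l)) : x ∈ FD l ↔ ∃ a, x = Sum.inl a := by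
  constructor
  · intro h
    obtain ⟨a, _, h⟩ := Finset.mem_image.1 h
    exact ⟨a, h.symm⟩
  · rintro ⟨a, rfl⟩
    exact Finset.mem_image.2 ⟨a, Finset.mem_univ _, rfl⟩

lemma FD_downset (l : ℕ) : IsDownset (Hposet l) (FD l) := by
  intro u v hu hvu
  rw [mem_FD] at hu ⊢
  obtain ⟨a, rfl⟩ := hu
  rcases v with b | b
  · exact ⟨b, rfl⟩
  · exact absurd hvu (by exact Sum.not_inr_le_inl)

lemma card_FD (l : ℕ) : (FD l).card = 3 * l := by
  have h : (Finset.univ : Finset (Copies l (WithTop (AntichainFin 2)))).card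
      = (FD l).card := by
    refine Finset.card_bij (fun a _ => (Sum.inl a : ↥(Hposet l))) ?_ ?_ ?_
    · intro a _
      exact (mem_FD l _).2 ⟨a, rfl⟩
    · intro a₁ _ a₂ _ hh
      exact Sum.inl.inj hh
    · intro x hx
      rw [mem_FD] at hx
      obtain ⟨a, rfl⟩ := hx
      exact ⟨a, Finset.mem_univ _, rfl⟩
  rw [← h, Finset.card_univ]
  have h2 : Fintype.card (Copies l (WithTop (AntichainFin 2)))
      = Fintype.card (Fin l × Option (Fin 2)) :=
    Fintype.card_congr
      (show Copies l (WithTop (AntichainFin 2)) ≃ Fin l × Option (Fin 2) from Equiv.refl _)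
  rw [h2, Fintype.card_prod, Fintype.card_option, Fintype.card_fin, Fintype.card_fin]
  omega

lemma sdd_FD (l : ℕ) (x : ↥(Hposet l)) (hx : x ∈ FD l) :
    sdd (Hposet l) x = 2 ∨
      (sdd (Hposet l) x = 0 ∧ ∃ k, x < htop l k ∧ htop l k ∈ FD l) := by
  rw [mem_FD] at hx
  obtain ⟨⟨k, w⟩, rfl⟩ := hx
  cases w with
  | top => exact Or.inl (sdd_htop l k)
  | coe a =>
    refine Or.inr ⟨sdd_hmin l k a, k, hmin_lt_htop l k a, ?_⟩
    rw [mem_FD]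
    exact ⟨(k, ⊤), rfl⟩

/-- The downset of `H_l` made of the whole big component plus two minimal elements of the
first copy of `Λ₂`. -/
def FE (l : ℕ) (hl : 2 ≤ l) : Finset ↥(Hposet l) :=
  Finset.univ.image
    (fun y : WithTop (AntichainFin (3 * (l - 1))) ⊕ AntichainFin 2 =>
      Sum.elim (fun b => (Sum.inr b : ↥(Hposet l))) (fun a => hmin l ⟨0, by omega⟩ a) y)

lemma mem_FE (l : ℕ) (hl : 2 ≤ l) (x : ↥(Hposet l)) : x ∈ FE l hl ↔
    (∃ b, x = Sum.inr b) ∨ ∃ a, x = hmin l ⟨0, by omega⟩ a := by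
  simp only [FE, Finset.mem_image, Finset.mem_univ, true_and]
  constructor
  · rintro ⟨y, rfl⟩
    rcases y with b | a
    · exact Or.inl ⟨b, rfl⟩
    · exact Or.inr ⟨a, rfl⟩
  · rintro (⟨b, rfl⟩ | ⟨a, rfl⟩)
    · exact ⟨Sum.inl b, rfl⟩
    · exact ⟨Sum.inr a, rfl⟩

lemma FE_downset (l : ℕ) (hl : 2 ≤ l) : IsDownset (Hposet l) (FE l hl) := by
  intro u v hu hvu
  rw [mem_FE] at hu ⊢
  rcases hu with ⟨b, rfl⟩ | ⟨a, rfl⟩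
  · rcases v with c | c
    · exact absurd hvu (by exact Sum.not_inl_le_inr)
    · exact Or.inl ⟨c, rfl⟩
  · exact Or.inr ⟨a, (le_hmin_iff _ _ _ _).1 hvu⟩

lemma btop_mem_FE (l : ℕ) (hl : 2 ≤ l) : btop l ∈ FE l hl := by
  rw [mem_FE]; exact Or.inl ⟨⊤, rfl⟩

lemma card_FE (l : ℕ) (hl : 2 ≤ l) : (FE l hl).card = 3 * l := by
  have h : (Finset.univ : Finset (WithTop (AntichainFin (3 * (l - 1))) ⊕ AntichainFin 2)).card
      = (FE l hl).card := by
    refine Finset.card_bij (fun y _ =>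
      Sum.elim (fun b => (Sum.inr b : ↥(Hposet l))) (fun a => hmin l ⟨0, by omega⟩ a) y) ?_ ?_ ?_
    · intro y _
      rw [mem_FE]
      rcases y with b | a
      · exact Or.inl ⟨b, rfl⟩
      · exact Or.inr ⟨a, rfl⟩
    · intro y₁ _ y₂ _ h
      rcases y₁ with b₁ | a₁ <;> rcases y₂ with b₂ | a₂
      · exact congrArg Sum.inl (Sum.inr.inj h)
      · exact absurd h (by exact Sum.inr_ne_inl)
      · exact absurd h (by exact Sum.inl_ne_inr)
      · exact congrArg Sum.inr (hmin_inj l _ h)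
    · intro x hx
      rw [mem_FE] at hx
      rcases hx with ⟨b, rfl⟩ | ⟨a, rfl⟩
      · exact ⟨Sum.inl b, Finset.mem_univ _, rfl⟩
      · exact ⟨Sum.inr a, Finset.mem_univ _, rfl⟩
  rw [← h, Finset.card_univ]
  have h2 : Fintype.card (WithTop (AntichainFin (3 * (l - 1))) ⊕ AntichainFin 2)
      = Fintype.card (Option (Fin (3 * (l - 1))) ⊕ Fin 2) :=
    Fintype.card_congr
      (show WithTop (AntichainFin (3 * (l - 1))) ⊕ AntichainFin 2
          ≃ Option (Fin (3 * (l - 1))) ⊕ Fin 2 from Equiv.refl _)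
  rw [h2, Fintype.card_sum, Fintype.card_option, Fintype.card_fin, Fintype.card_fin]
  omega

lemma sdd_FE (l : ℕ) (hl : 2 ≤ l) (x : ↥(Hposet l)) (hx : x ∈ FE l hl) (hne : x ≠ btop l) :
    sdd (Hposet l) x = 0 := by
  rw [mem_FE] at hx
  rcases hx with ⟨b, rfl⟩ | ⟨a, rfl⟩
  · cases b with
    | top => exact absurd rfl hne
    | coe a => exact sdd_bmin l a
  · exact sdd_hmin _ _ _

/-- No downset of `H_l` of size `3l` contains both an element of down-degree `3(l-1)`
and an element of down-degree `2`. -/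
lemma H_no_two (l : ℕ) (hl : 2 ≤ l) (F : Finset ↥(Hposet l)) (hF : IsDownset (Hposet l) F)
    (hcard : F.card = 3 * l) (u v : ↥(Hposet l)) (hu : u ∈ F) (hv : v ∈ F)
    (hsu : sdd (Hposet l) u = 3 * (l - 1)) (hsv : sdd (Hposet l) v = 2) : False := by
  have hu' : u = btop l := by
    rcases H_classify l u with ⟨k, rfl⟩ | h | h
    · rw [sdd_htop] at hsu; omega
    · exact h
    · omega
  obtain ⟨k, hv'⟩ : ∃ k, v = htop l k := by
    rcases H_classify l v with h | rfl | h
    · exact h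
    · rw [sdd_btop] at hsv; omega
    · omega
  subst hu' hv'
  have hBuF : Finset.univ.filter (fun y => y < btop l) ⊆ F := by
    intro y hy
    rw [Finset.mem_filter] at hy
    exact hF hu hy.2.le
  have hBvF : Finset.univ.filter (fun y => y < htop l k) ⊆ F := by
    intro y hy
    rw [Finset.mem_filter] at hy
    exact hF hv hy.2.le
  have hdisj : Disjoint (Finset.univ.filter (fun y => y < btop l))
      (Finset.univ.filter (fun y => y < htop l k)) := by
    rw [Finset.disjoint_left]
    intro y hy hy'
    rw [Finset.mem_filter, lt_btop_iff] at hy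
    rw [Finset.mem_filter, lt_htop_iff] at hy'
    obtain ⟨a, rfl⟩ := hy.2
    obtain ⟨a', ha'⟩ := hy'.2
    exact Sum.inr_ne_inl ha'
  have hsub : insert (btop l) (insert (htop l k)
      (Finset.univ.filter (fun y => y < btop l) ∪
        Finset.univ.filter (fun y => y < htop l k))) ⊆ F := by
    intro y hy
    rcases Finset.mem_insert.1 hy with rfl | hy
    · exact hu
    · rcases Finset.mem_insert.1 hy with rfl | hy
      · exact hv
      · rcases Finset.mem_union.1 hy with hy | hy
        · exact hBuF hy
        · exact hBvF hy
  have hb1 : btop l ∉ insert (htop l k)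
      (Finset.univ.filter (fun y => y < btop l) ∪
        Finset.univ.filter (fun y => y < htop l k)) := by
    simp only [Finset.mem_insert, Finset.mem_union, Finset.mem_filter,
      Finset.mem_univ, true_and]
    rintro (h | h | h)
    · exact Sum.inr_ne_inl h
    · exact lt_irrefl _ h
    · exact Sum.not_inr_lt_inl h
  have hb2 : htop l k ∉ Finset.univ.filter (fun y => y < btop l) ∪
      Finset.univ.filter (fun y => y < htop l k) := by
    simp only [Finset.mem_union, Finset.mem_filter, Finset.mem_univ, true_and]
    rintro (h | h)
    · exact Sum.not_inl_lt_inr h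
    · exact lt_irrefl _ h
  have hc1 : (Finset.univ.filter (fun y => y < btop l)).card = 3 * (l - 1) := sdd_btop l
  have hc2 : (Finset.univ.filter (fun y => y < htop l k)).card = 2 := sdd_htop l k
  have hcards := Finset.card_le_card hsub
  rw [Finset.card_insert_of_notMem hb1, Finset.card_insert_of_notMem hb2,
    Finset.card_union_of_disjoint hdisj, hc1, hc2, hcard] at hcards
  omega

/-- From `d < x`, `d < t` with everything below `x` minimal and `t` of down-degree 2,
build a small downset containing both `x` and `t`. -/
lemma small_downset (Q : FinPartOrd.{0}) (x t d : ↥Q) (hdx : d < x) (hdt : d < t)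
    (hxzero : ∀ y, y < x → sdd Q y = 0) (hst : sdd Q t = 2) :
    ∃ S₀ : Finset ↥Q, IsDownset Q S₀ ∧ x ∈ S₀ ∧ t ∈ S₀ ∧ S₀.card ≤ sdd Q x + 3 := by
  refine ⟨insert x (insert t
    (Finset.univ.filter (fun y => y < x) ∪ Finset.univ.filter (fun y => y < t))),
    ?_, Finset.mem_insert_self _ _,
    Finset.mem_insert_of_mem (Finset.mem_insert_self _ _), ?_⟩
  · intro u v hu hvu
    rw [Finset.mem_insert, Finset.mem_insert, Finset.mem_union] at hu ⊢
    rcases hu with rfl | rfl | hu | hu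
    · rcases hvu.lt_or_eq with hlt | rfl
      · exact Or.inr (Or.inr (Or.inl (Finset.mem_filter.2 ⟨Finset.mem_univ _, hlt⟩)))
      · exact Or.inl rfl
    · rcases hvu.lt_or_eq with hlt | rfl
      · exact Or.inr (Or.inr (Or.inr (Finset.mem_filter.2 ⟨Finset.mem_univ _, hlt⟩)))
      · exact Or.inr (Or.inl rfl)
    · rcases hvu.lt_or_eq with hlt | rfl
      · have hu0 := hxzero u (Finset.mem_filter.1 hu).2
        rw [sdd_eq_zero_iff] at hu0
        exact absurd hlt (hu0 v)
      · exact Or.inr (Or.inr (Or.inl hu))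
    · rcases hvu.lt_or_eq with hlt | rfl
      · have hut := (Finset.mem_filter.1 hu).2
        exact Or.inr (Or.inr (Or.inr
          (Finset.mem_filter.2 ⟨Finset.mem_univ _, hlt.trans hut⟩)))
      · exact Or.inr (Or.inr (Or.inr hu))
  · have hdBx : d ∈ Finset.univ.filter (fun y => y < x) :=
      Finset.mem_filter.2 ⟨Finset.mem_univ _, hdx⟩
    have hdBt : d ∈ Finset.univ.filter (fun y => y < t) :=
      Finset.mem_filter.2 ⟨Finset.mem_univ _, hdt⟩
    have hinter : 1 ≤ (Finset.univ.filter (fun y => y < x) ∩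
        Finset.univ.filter (fun y => y < t)).card :=
      Finset.card_pos.2 ⟨d, Finset.mem_inter.2 ⟨hdBx, hdBt⟩⟩
    have hU := Finset.card_union_add_card_inter (Finset.univ.filter (fun y => y < x))
      (Finset.univ.filter (fun y => y < t))
    have hcx : (Finset.univ.filter (fun y => y < x)).card = sdd Q x := rfl
    have hct : (Finset.univ.filter (fun y => y < t)).card = 2 := hst
    have i1 := Finset.card_insert_le x (insert t
      (Finset.univ.filter (fun y => y < x) ∪ Finset.univ.filter (fun y => y < t)))
    have i2 := Finset.card_insert_le t
      (Finset.univ.filter (fun y => y < x) ∪ Finset.univ.filter (fun y => y < t))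
    omega

end AuxF

lemma sdd_transfer {Q R : FinPartOrd.{0}} {S : Finset ↥Q} {T : Finset ↥R}
    (hS : IsDownset Q S) (hT : IsDownset R T) (e : ↥(subposet Q S) ≃o ↥(subposet R T))
    (x : ↥(subposet Q S)) : sdd Q x.val = sdd R (e x).val := by
  rw [← sdd_subposet hS x, sdd_iso e, sdd_subposet hT]

/-- For `ℓ ≥ 2`, no witness to `D_{3ℓ}(H_ℓ)` has size less than
`|H_ℓ| = 6ℓ − 2`. -/
theorem H_no_smaller_witness (l : ℕ) (hl : 2 ≤ l) :
    size (Hposet l) = 6 * l - 2 ∧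
      ∀ Q : FinPartOrd.{0}, IsWitness (3 * l) (DSet (3 * l) (Hposet l)) Q →
        6 * l - 2 ≤ size Q := by
  have hsize : size (Hposet l) = 6 * l - 2 := by
    have h : Fintype.card ↥(Hposet l)
        = Fintype.card ((Fin l × Option (Fin 2)) ⊕ Option (Fin (3 * (l - 1)))) :=
      Fintype.card_congr
        (show ↥(Hposet l) ≃ (Fin l × Option (Fin 2)) ⊕ Option (Fin (3 * (l - 1))) from
          Equiv.refl _)
    have h2 : Fintype.card ((Fin l × Option (Fin 2)) ⊕ Option (Fin (3 * (l - 1))))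
        = l * 3 + (3 * (l - 1) + 1) := by
      rw [Fintype.card_sum, Fintype.card_prod, Fintype.card_option, Fintype.card_option,
        Fintype.card_fin, Fintype.card_fin, Fintype.card_fin]
    show Fintype.card ↥(Hposet l) = 6 * l - 2
    rw [h, h2]; omega
  refine ⟨hsize, ?_⟩
  intro Q hW
  have hW' : DSet (3 * l) Q = DSet (3 * l) (Hposet l) := hW
  have hFEd := FE_downset l hl
  have hFDd := FD_downset l
  -- extract the downset E, a copy of Λ_{3(l-1)} ⊔ A₂
  have hEmem : cls (subposet (Hposet l) (FE l hl)) ∈ DSet (3 * l) Q := by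
    rw [hW']
    exact ⟨FE l hl, hFEd, card_FE l hl, rfl⟩
  obtain ⟨E, hEdown, hEcard, hEcls⟩ := hEmem
  obtain ⟨e⟩ : Nonempty (↥(subposet Q E) ≃o ↥(subposet (Hposet l) (FE l hl))) :=
    Quotient.exact hEcls
  let wt : ↥(subposet (Hposet l) (FE l hl)) := ⟨btop l, btop_mem_FE l hl⟩
  let xx : ↥(subposet Q E) := e.symm wt
  have hsx₀ : sdd Q xx.val = 3 * (l - 1) := by
    have h := sdd_transfer hEdown hFEd e xx
    rw [show e xx = wt from e.apply_symm_apply wt] at h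
    exact h.trans (sdd_btop l)
  have hEzero : ∀ y (hy : y ∈ E), y ≠ xx.val → sdd Q y = 0 := by
    intro y hy hne
    have h := sdd_transfer hEdown hFEd e ⟨y, hy⟩
    rw [h]
    refine sdd_FE l hl _ (e ⟨y, hy⟩).2 ?_
    intro hbt
    apply hne
    have h1 : e ⟨y, hy⟩ = wt := Subtype.ext hbt
    have h2 := congrArg e.symm h1
    exact congrArg Subtype.val ((e.symm_apply_apply _).symm.trans h2)
  have hBxzero : ∀ y, y < xx.val → sdd Q y = 0 := fun y hy =>
    hEzero y (hEdown xx.2 hy.le) (ne_of_lt hy)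
  -- extract the downset D, a copy of l disjoint copies of Λ₂
  have hDmem : cls (subposet (Hposet l) (FD l)) ∈ DSet (3 * l) Q := by
    rw [hW']
    exact ⟨FD l, hFDd, card_FD l, rfl⟩
  obtain ⟨D, hDdown, hDcard, hDcls⟩ := hDmem
  obtain ⟨f⟩ : Nonempty (↥(subposet Q D) ≃o ↥(subposet (Hposet l) (FD l))) :=
    Quotient.exact hDcls
  have hD : ∀ d (hd : d ∈ D), sdd Q d = 2 ∨
      (sdd Q d = 0 ∧ ∃ t ∈ D, d < t ∧ sdd Q t = 2) := by
    intro d hd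
    have h := sdd_transfer hDdown hFDd f ⟨d, hd⟩
    rcases sdd_FD l _ (f ⟨d, hd⟩).2 with hs2 | ⟨hs0, k, hlt, htmem⟩
    · exact Or.inl (h.trans hs2)
    · refine Or.inr ⟨h.trans hs0, (f.symm ⟨htop l k, htmem⟩).val, (f.symm _).2, ?_, ?_⟩
      · have hlt' : f ⟨d, hd⟩ < (⟨htop l k, htmem⟩ : ↥(subposet (Hposet l) (FD l))) :=
          Subtype.coe_lt_coe.1 hlt
        have h3 := f.symm.lt_iff_lt.2 hlt'
        exact Subtype.coe_lt_coe.2 (lt_of_eq_of_lt (f.symm_apply_apply _).symm h3)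
      · have h2 := sdd_transfer hFDd hDdown f.symm ⟨htop l k, htmem⟩
        exact h2.symm.trans (sdd_htop l k)
  have hn_le : 3 * l ≤ Fintype.card ↥Q := by
    have h1 := Finset.card_le_univ D
    rw [hDcard] at h1
    exact h1
  -- key step: D avoids x₀ and everything below it
  have hkey : ∀ d ∈ D, d ≠ xx.val ∧ ¬ d < xx.val := by
    intro d hd
    rcases hD d hd with h2 | ⟨h0, t, htD, hdt, hst⟩
    · constructor
      · intro h; rw [h, hsx₀] at h2; omega
      · intro hlt; rw [hBxzero d hlt] at h2; omega
    · constructor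
      · intro h; rw [h, hsx₀] at h0; omega
      · intro hdx
        obtain ⟨S₀, hS₀down, hxS₀, htS₀, hS₀card⟩ :=
          small_downset Q xx.val t d hdx hdt hBxzero hst
        rw [hsx₀] at hS₀card
        obtain ⟨S, hS₀S, hSdown, hScard⟩ :=
          downset_extend Q (3 * l - S₀.card) S₀ hS₀down (3 * l) (by omega) hn_le
        have hxS : xx.val ∈ S := hS₀S hxS₀
        have htS : t ∈ S := hS₀S htS₀
        have hSmem : cls (subposet Q S) ∈ DSet (3 * l) (Hposet l) := by
          rw [← hW']
          exact ⟨S, hSdown, hScard, rfl⟩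
        obtain ⟨F, hFdown, hFcard, hFcls⟩ := hSmem
        obtain ⟨g'⟩ : Nonempty (↥(subposet (Hposet l) F) ≃o ↥(subposet Q S)) :=
          Quotient.exact hFcls
        have h1 := sdd_transfer hSdown hFdown g'.symm ⟨xx.val, hxS⟩
        have h2 := sdd_transfer hSdown hFdown g'.symm ⟨t, htS⟩
        exact H_no_two l hl F hFdown hFcard _ _ (g'.symm ⟨xx.val, hxS⟩).2 (g'.symm ⟨t, htS⟩).2
          (h1.symm.trans hsx₀) (h2.symm.trans hst)
  -- final counting
  have hxnB : xx.val ∉ Finset.univ.filter (fun y => y < xx.val) := by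
    rw [Finset.mem_filter]
    exact fun h => lt_irrefl _ h.2
  have hdisjoint : Disjoint D (insert xx.val (Finset.univ.filter (fun y => y < xx.val))) := by
    rw [Finset.disjoint_left]
    intro d hd hmem
    rcases Finset.mem_insert.1 hmem with rfl | hmem
    · exact (hkey _ hd).1 rfl
    · exact (hkey d hd).2 (Finset.mem_filter.1 hmem).2
  have hBxcard : (Finset.univ.filter (fun y => y < xx.val)).card = 3 * (l - 1) := hsx₀
  have hcardunion : (D ∪ insert xx.val (Finset.univ.filter (fun y => y < xx.val))).card
      = 3 * l + (1 + 3 * (l - 1)) := by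
    rw [Finset.card_union_of_disjoint hdisjoint, Finset.card_insert_of_notMem hxnB,
      hDcard, hBxcard]
    omega
  have hle := Finset.card_le_card
    (Finset.subset_univ (D ∪ insert xx.val (Finset.univ.filter (fun y => y < xx.val))))
  rw [hcardunion, Finset.card_univ] at hle
  show 6 * l - 2 ≤ Fintype.card ↥Q
  omega
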